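/- Recursion in the last y-variable: with q̃_m(u; v | a) as below, q̃_m(u; v|a) = q̃_m(u; v'|a) + (v_s − a_{m+r-s})·q̃_{m-1}(u; v'|a), where v' = (v_1,...,v_{s-1}). -/

import Mathlib

open PowerSeries Finset

noncomputable section

/-- `geom x` is the formal power series `1/(1-tx) = ∑ xⁿ tⁿ`. -/
def geom {R : Type*} [CommRing R] (x : R) : PowerSeries R := PowerSeries.mk fun n => x ^ n

/-- `lin a` is the formal power series `1 + t·a`. -/
def lin {R : Type*} [CommRing R] (a : R) : PowerSeries R :=
  1 + PowerSeries.C a * PowerSeries.X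

/-- Factorial power `(x|a)^m = (x+a₁)(x+a₂)···(x+a_m)`. -/
def factPow {R : Type*} [CommRing R] (x : R) (a : ℕ → R) (m : ℕ) : R :=
  ∏ k ∈ Finset.range m, (x + a (k + 1))

/-- Flagged factorial complete function h_m(x_p,…,x_q | a), zero for m < 0. -/
def hfun {R : Type*} [CommRing R] (x a : ℕ → R) (p q : ℕ) (m : ℤ) : R :=
  if m < 0 then 0 else
    PowerSeries.coeff m.toNat ((∏ ℓ ∈ Finset.Icc p q, geom (x ℓ)) *
      ∏ k ∈ Finset.range (m.toNat + q - p), lin (a (k + 1)))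


lemma coeff_mul_lin {R : Type*} [CommRing R] (F : PowerSeries R) (c : R) (m : ℕ)
    (hm : 1 ≤ m) :
    PowerSeries.coeff m (F * lin c) =
      PowerSeries.coeff m F + c * PowerSeries.coeff (m - 1) F := by
  obtain ⟨n, rfl⟩ : ∃ n, m = n + 1 := ⟨m - 1, (Nat.succ_pred_eq_of_pos hm).symm⟩
  have : F * lin c = F + (F * PowerSeries.X) * PowerSeries.C c := by
    simp [lin]; ring
  rw [this, map_add, PowerSeries.coeff_mul_C, PowerSeries.coeff_succ_mul_X,
    Nat.add_sub_cancel, mul_comm]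

/-- Recursion for q̃ₘ(u;v|a) in the last v-variable:
q̃ₘ(u;v|a) = q̃ₘ(u;v'|a) + (v_s − a_{m+r-s})·q̃_{m-1}(u;v'|a). -/
theorem stmt17 {R : Type*} [CommRing R] (r s m : ℕ) (u v a : ℕ → R)
    (hm : 1 ≤ m) (hs : 1 ≤ s) (hrs : s + 1 ≤ m + r) :
    PowerSeries.coeff m ((∏ i ∈ Finset.Icc 1 r, geom (u i)) *
        (∏ j ∈ Finset.Icc 1 s, lin (v j)) *
        ∏ k ∈ Finset.range (m + r - s - 1), lin (a (k + 1))) =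
    PowerSeries.coeff m ((∏ i ∈ Finset.Icc 1 r, geom (u i)) *
        (∏ j ∈ Finset.Icc 1 (s - 1), lin (v j)) *
        ∏ k ∈ Finset.range (m + r - s), lin (a (k + 1))) +
    (v s - a (m + r - s)) * PowerSeries.coeff (m - 1)
      ((∏ i ∈ Finset.Icc 1 r, geom (u i)) * (∏ j ∈ Finset.Icc 1 (s - 1), lin (v j)) *
        ∏ k ∈ Finset.range (m + r - s - 1), lin (a (k + 1))) := by
  obtain ⟨n, rfl⟩ : ∃ n, s = n + 1 := ⟨s - 1, (Nat.succ_pred_eq_of_pos hs).symm⟩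
  have h1 : 1 ≤ m + r - (n + 1) := by omega
  have hIcc : ∏ j ∈ Finset.Icc 1 (n + 1), lin (v j)
      = (∏ j ∈ Finset.Icc 1 n, lin (v j)) * lin (v (n + 1)) := by
    rw [← Finset.prod_Icc_succ_top (by omega : 1 ≤ n + 1)]
  have hrange : ∏ k ∈ Finset.range (m + r - (n + 1)), lin (a (k + 1))
      = (∏ k ∈ Finset.range (m + r - (n + 1) - 1), lin (a (k + 1)))
        * lin (a (m + r - (n + 1))) := by
    have : m + r - (n + 1) = (m + r - (n + 1) - 1) + 1 := by omega
    rw [this, Finset.prod_range_succ, Nat.sub_add_cancel h1]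
  set P := (∏ i ∈ Finset.Icc 1 r, geom (u i)) * (∏ j ∈ Finset.Icc 1 n, lin (v j)) *
    ∏ k ∈ Finset.range (m + r - (n + 1) - 1), lin (a (k + 1)) with hP
  have hL : (∏ i ∈ Finset.Icc 1 r, geom (u i)) *
      (∏ j ∈ Finset.Icc 1 (n + 1), lin (v j)) *
      ∏ k ∈ Finset.range (m + r - (n + 1) - 1), lin (a (k + 1)) = P * lin (v (n + 1)) := by
    rw [hIcc, hP]; ring
  have hR : (∏ i ∈ Finset.Icc 1 r, geom (u i)) *
      (∏ j ∈ Finset.Icc 1 n, lin (v j)) *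
      ∏ k ∈ Finset.range (m + r - (n + 1)), lin (a (k + 1))
      = P * lin (a (m + r - (n + 1))) := by
    rw [hrange, hP]; ring
  simp only [Nat.add_sub_cancel, hL, hR, ← hP]
  rw [coeff_mul_lin _ _ _ hm, coeff_mul_lin _ _ _ hm]
  ring
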